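/- The discriminant Δ of binary cubic forms, as a polynomial of degree 4 on the 4-dimensional space V of binary cubics, spans the space of SL(2,ℂ)-invariant elements of Sym⁴ V*: any degree-4 polynomial P on V with P(g·x) = P(x) for all g ∈ SL(2,ℂ) is a scalar multiple of Δ. -/

import Mathlib

open MvPolynomial

/-- The value of the binary cubic form with coefficient vector `x` at `v`. -/
noncomputable def cubicValC (x : Fin 4 → ℂ) (v : Fin 2 → ℂ) : ℂ :=
  x 0 * v 0 ^ 3 + x 1 * v 0 ^ 2 * v 1 + x 2 * v 0 * v 1 ^ 2 + x 3 * v 1 ^ 3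

/-- The discriminant of binary cubic forms as a polynomial in the coefficients. -/
noncomputable def discPoly : MvPolynomial (Fin 4) ℂ :=
  X 1 ^ 2 * X 2 ^ 2 + 18 * X 0 * X 1 * X 2 * X 3 - 4 * X 0 * X 2 ^ 3
    - 4 * X 1 ^ 3 * X 3 - 27 * X 0 ^ 2 * X 3 ^ 2

namespace DiscAux

noncomputable def m (a b c e : ℕ) : Fin 4 →₀ ℕ := Finsupp.equivFunOnFinite.symm ![a, b, c, e]

@[simp] lemma m_apply_0 (a b c e : ℕ) : m a b c e 0 = a := rfl
@[simp] lemma m_apply_1 (a b c e : ℕ) : m a b c e 1 = b := rfl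
@[simp] lemma m_apply_2 (a b c e : ℕ) : m a b c e 2 = c := rfl
@[simp] lemma m_apply_3 (a b c e : ℕ) : m a b c e 3 = e := rfl

@[simp] lemma m_inj {a b c e a' b' c' e' : ℕ} :
    m a b c e = m a' b' c' e' ↔ (a = a' ∧ b = b' ∧ c = c' ∧ e = e') := by
  constructor
  · intro h
    exact ⟨DFunLike.congr_fun h 0, DFunLike.congr_fun h 1,
      DFunLike.congr_fun h 2, DFunLike.congr_fun h 3⟩
  · rintro ⟨rfl, rfl, rfl, rfl⟩; rfl

lemma degree_m (a b c e : ℕ) : (m a b c e).degree = a + b + c + e := by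
  have h : (m a b c e).degree = ∑ i : Fin 4, m a b c e i :=
    Finset.sum_subset (Finset.subset_univ _)
      (fun i _ hi => Finsupp.notMem_support_iff.mp hi)
  rw [h, Fin.sum_univ_four, m_apply_0, m_apply_1, m_apply_2, m_apply_3]

lemma monomial_m (a b c e : ℕ) :
    (monomial (m a b c e) (1 : ℂ)) = X 0 ^ a * X 1 ^ b * X 2 ^ c * X 3 ^ e := by
  rw [monomial_eq, C_1, one_mul, Finsupp.prod_fintype _ _ (fun i => pow_zero _),
    Fin.prod_univ_four]
  rfl

lemma coeff_scale (s : Fin 4 → ℂ) (p : MvPolynomial (Fin 4) ℂ) (d : Fin 4 →₀ ℕ) :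
    coeff d (bind₁ (fun i => C (s i) * X i) p) = (∏ i, s i ^ d i) * coeff d p := by
  rw [← aeval_eq_bind₁]
  induction p using MvPolynomial.induction_on' with
  | add p q hp hq => rw [map_add, coeff_add, coeff_add, hp, hq, mul_add]
  | monomial u a =>
    have key : (aeval (fun i => C (s i) * X i : Fin 4 → MvPolynomial (Fin 4) ℂ)) (monomial u a)
        = monomial u (a * ∏ i ∈ u.support, s i ^ u i) := by
      rw [aeval_monomial, monomial_eq, map_mul, Finsupp.prod, Finsupp.prod]
      rw [Finset.prod_congr rfl (fun i _ => mul_pow (C (s i)) (X i) (u i)),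
        Finset.prod_mul_distrib]
      simp only [← C_pow]
      rw [← map_prod]
      simp only [algebraMap_eq]
      ring
    rw [key, coeff_monomial, coeff_monomial]
    split_ifs with h
    · subst h
      have hs : ∏ i ∈ u.support, s i ^ u i = ∏ i : Fin 4, s i ^ u i :=
        Finset.prod_subset (Finset.subset_univ _) (fun i _ hi => by
          rw [Finsupp.notMem_support_iff.mp hi, pow_zero])
      rw [hs, mul_comm]
    · ring

end DiscAux

set_option maxHeartbeats 2000000

open DiscAux

/-- Multiplicity one for the degree-4 invariant of binary cubics: any homogeneous
degree-4 polynomial on the space of binary cubic forms invariant under the SL(2,ℂ)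
substitution action (`y = g·x` meaning the cubic `y` is `x` composed with `g⁻¹`) is a
scalar multiple of the discriminant `Δ`. -/
theorem degree_four_invariant_is_multiple_of_disc (P : MvPolynomial (Fin 4) ℂ)
    (hP : P.IsHomogeneous 4)
    (hinv : ∀ g : Matrix.SpecialLinearGroup (Fin 2) ℂ, ∀ x y : Fin 4 → ℂ,
      (∀ v, cubicValC y v = cubicValC x ((↑(g⁻¹) : Matrix (Fin 2) (Fin 2) ℂ).mulVec v)) →
      eval y P = eval x P) :
    ∃ c : ℂ, P = c • discPoly := by
  have eval_bind₁ : ∀ (x : Fin 4 → ℂ) (f : Fin 4 → MvPolynomial (Fin 4) ℂ)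
      (p : MvPolynomial (Fin 4) ℂ),
      eval x (bind₁ f p) = eval (fun i => eval x (f i)) p := fun x f p =>
    eval₂Hom_bind₁ (RingHom.id ℂ) x f p
  -- torus invariance
  have hdet1 : (!![2, 0; 0, (1:ℂ)/2]).det = 1 := by norm_num [Matrix.det_fin_two_of]
  have hPeq : bind₁ (fun i => C ((![1/8, 1/2, 2, 8] : Fin 4 → ℂ) i) * X i) P = P := by
    apply MvPolynomial.funext
    intro x
    have hx := hinv ⟨!![2, 0; 0, (1:ℂ)/2], hdet1⟩ x
      (fun i => (![1/8, 1/2, 2, 8] : Fin 4 → ℂ) i * x i) (by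
        intro v
        erw [Matrix.SpecialLinearGroup.coe_inv]
        simp [cubicValC, Matrix.SpecialLinearGroup.coe_inv, Matrix.adjugate_fin_two_of,
          Matrix.mulVec, dotProduct, Fin.sum_univ_two]
        ring)
    rw [eval_bind₁]
    rw [show (fun i => eval x (C ((![1/8, 1/2, 2, 8] : Fin 4 → ℂ) i) * X i))
        = fun i => (![1/8, 1/2, 2, 8] : Fin 4 → ℂ) i * x i from funext fun i => by simp]
    exact hx
  have hvan : ∀ a b c e : ℕ, ((1/8 : ℂ)^a * (1/2)^b * 2^c * 8^e ≠ 1) →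
      coeff (m a b c e) P = 0 := by
    intro a b c e hne
    have h := coeff_scale (![1/8, 1/2, 2, 8]) P (m a b c e)
    rw [hPeq, Fin.prod_univ_four] at h
    simp only [m_apply_0, m_apply_1, m_apply_2, m_apply_3, Matrix.cons_val_zero,
      Matrix.cons_val_one, Matrix.cons_val_two, Matrix.cons_val_three, Matrix.head_cons,
      Matrix.tail_cons] at h
    have h2 : ((1/8 : ℂ)^a * (1/2)^b * 2^c * 8^e - 1) * coeff (m a b c e) P = 0 := by
      linear_combination -h
    rcases mul_eq_zero.mp h2 with h' | h'
    · exact absurd (sub_eq_zero.mp h') hne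
    · exact h'
  have hrep : P = (coeff (m 1 1 1 1) P) • monomial (m 1 1 1 1) (1:ℂ)
      + (coeff (m 0 2 2 0) P) • monomial (m 0 2 2 0) 1
      + (coeff (m 1 0 3 0) P) • monomial (m 1 0 3 0) 1
      + (coeff (m 0 3 0 1) P) • monomial (m 0 3 0 1) 1
      + (coeff (m 2 0 0 2) P) • monomial (m 2 0 0 2) 1 := by
    refine MvPolynomial.ext _ _ fun d => ?_
    obtain ⟨a, b, c, e, rfl⟩ : ∃ a b c e, d = m a b c e :=
      ⟨d 0, d 1, d 2, d 3, by ext i; fin_cases i <;> rfl⟩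
    by_cases h4 : a + b + c + e = 4
    · have ha : a ≤ 4 := by omega
      have hb : b ≤ 4 := by omega
      have hc : c ≤ 4 := by omega
      have he : e ≤ 4 := by omega
      interval_cases a <;> interval_cases b <;> interval_cases c <;> interval_cases e <;>
        first
          | (exfalso; omega)
          | (simp [coeff_add, coeff_smul, coeff_monomial, m_inj]
             try exact hvan _ _ _ _ (by norm_num))
    · rw [hP.coeff_eq_zero (by rw [degree_m]; exact h4)]
      simp only [coeff_add, coeff_smul, coeff_monomial, m_inj, smul_eq_mul]
      split_ifs <;> first | (exfalso; omega) | norm_num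
  have hdetU : (!![1, 1; 0, (1:ℂ)]).det = 1 := by norm_num [Matrix.det_fin_two_of]
  have hdetL : (!![1, 0; 1, (1:ℂ)]).det = 1 := by norm_num [Matrix.det_fin_two_of]
  have e1 := hinv ⟨_, hdetU⟩ ![0,1,0,0] ![0,1,-2,1] (by
    intro v
    erw [Matrix.SpecialLinearGroup.coe_inv]
    simp [cubicValC, Matrix.SpecialLinearGroup.coe_inv, Matrix.adjugate_fin_two_of,
          Matrix.mulVec, dotProduct, Fin.sum_univ_two, Matrix.cons_val_zero,
          Matrix.cons_val_one, Matrix.cons_val_two, Matrix.cons_val_three, Matrix.head_cons,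
          Matrix.tail_cons]
    ring)
  have e2 := hinv ⟨_, hdetL⟩ ![0,0,1,0] ![1,-2,1,0] (by
    intro v
    erw [Matrix.SpecialLinearGroup.coe_inv]
    simp [cubicValC, Matrix.SpecialLinearGroup.coe_inv, Matrix.adjugate_fin_two_of,
          Matrix.mulVec, dotProduct, Fin.sum_univ_two, Matrix.cons_val_zero,
          Matrix.cons_val_one, Matrix.cons_val_two, Matrix.cons_val_three, Matrix.head_cons,
          Matrix.tail_cons]
    ring)
  have e3 := hinv ⟨_, hdetU⟩ ![1,0,0,1] ![1,-3,3,0] (by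
    intro v
    erw [Matrix.SpecialLinearGroup.coe_inv]
    simp [cubicValC, Matrix.SpecialLinearGroup.coe_inv, Matrix.adjugate_fin_two_of,
          Matrix.mulVec, dotProduct, Fin.sum_univ_two, Matrix.cons_val_zero,
          Matrix.cons_val_one, Matrix.cons_val_two, Matrix.cons_val_three, Matrix.head_cons,
          Matrix.tail_cons]
    ring)
  have e4 := hinv ⟨_, hdetU⟩ ![1,2,0,0] ![1,-1,-1,1] (by
    intro v
    erw [Matrix.SpecialLinearGroup.coe_inv]
    simp [cubicValC, Matrix.SpecialLinearGroup.coe_inv, Matrix.adjugate_fin_two_of,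
          Matrix.mulVec, dotProduct, Fin.sum_univ_two, Matrix.cons_val_zero,
          Matrix.cons_val_one, Matrix.cons_val_two, Matrix.cons_val_three, Matrix.head_cons,
          Matrix.tail_cons]
    ring)
  rw [hrep] at e1 e2 e3 e4
  simp only [monomial_m, smul_eval, map_add, map_mul, map_pow, eval_X, map_neg,
    Matrix.cons_val_zero, Matrix.cons_val_one, Matrix.cons_val_two, Matrix.cons_val_three,
    Matrix.head_cons, Matrix.tail_cons] at e1 e2 e3 e4
  have hC : coeff (m 1 0 3 0) P = (-4) * coeff (m 0 2 2 0) P := by linear_combination e2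
  have hD : coeff (m 0 3 0 1) P = (-4) * coeff (m 0 2 2 0) P := by linear_combination e1
  have hE : coeff (m 2 0 0 2) P = (-27) * coeff (m 0 2 2 0) P := by
    linear_combination (-1 : ℂ) * e3 + 27 * hC
  have hA : coeff (m 1 1 1 1) P = 18 * coeff (m 0 2 2 0) P := by
    linear_combination e4 + hC + hD - hE
  refine ⟨coeff (m 0 2 2 0) P, ?_⟩
  rw [hA, hC, hD, hE] at hrep
  generalize coeff (m 0 2 2 0) P = B at hrep ⊢
  rw [hrep, discPoly]
  simp only [monomial_m, smul_eq_C_mul, map_mul, map_neg, map_ofNat]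
  ring
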